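/- Let A ∈ ℝ^{n×n} be symmetric and tridiagonal, and suppose Q ∈ ℝ^{2n×n} has orthonormal columns and R ∈ ℝ^{n×n} is invertible and upper triangular with [A; I_n] = QR. Then for every 1 ≤ k < n, the submatrix Q(1:k, k+1:n) (rows 1..k, columns k+1..n of Q) has rank at most 2, and the submatrix Q(n+1:n+k, k+1:n) has rank at most 2. -/

import Mathlib

open Matrix

set_option linter.unusedSectionVars false

section Helpers
variable {p q : Type*} [Fintype p] [Fintype q] [DecidableEq p] [DecidableEq q]

lemma tb_mul₁₂ (X Y : Matrix (p ⊕ q) (p ⊕ q) ℝ) :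
    (X * Y).toBlocks₁₂ =
      X.toBlocks₁₁ * Y.toBlocks₁₂ + X.toBlocks₁₂ * Y.toBlocks₂₂ := by
  ext i j
  simp [toBlocks₁₁, toBlocks₁₂, toBlocks₂₂, Matrix.mul_apply, Fintype.sum_sum_type]

lemma tb_mul₁₁ (X Y : Matrix (p ⊕ q) (p ⊕ q) ℝ) :
    (X * Y).toBlocks₁₁ =
      X.toBlocks₁₁ * Y.toBlocks₁₁ + X.toBlocks₁₂ * Y.toBlocks₂₁ := by
  ext i j
  simp [toBlocks₁₁, toBlocks₁₂, toBlocks₂₁, Matrix.mul_apply, Fintype.sum_sum_type]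

lemma tb_mul₂₁ (X Y : Matrix (p ⊕ q) (p ⊕ q) ℝ) :
    (X * Y).toBlocks₂₁ =
      X.toBlocks₂₁ * Y.toBlocks₁₁ + X.toBlocks₂₂ * Y.toBlocks₂₁ := by
  ext i j
  simp [toBlocks₂₁, toBlocks₁₁, toBlocks₂₂, Matrix.mul_apply, Fintype.sum_sum_type]

lemma tb_mul₂₂ (X Y : Matrix (p ⊕ q) (p ⊕ q) ℝ) :
    (X * Y).toBlocks₂₂ =
      X.toBlocks₂₁ * Y.toBlocks₁₂ + X.toBlocks₂₂ * Y.toBlocks₂₂ := by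
  ext i j
  simp [toBlocks₂₁, toBlocks₁₂, toBlocks₂₂, Matrix.mul_apply, Fintype.sum_sum_type]

lemma tb_one₁₁ : (1 : Matrix (p ⊕ q) (p ⊕ q) ℝ).toBlocks₁₁ = 1 := by
  ext i j; simp [toBlocks₁₁, Matrix.one_apply]

lemma tb_one₁₂ : (1 : Matrix (p ⊕ q) (p ⊕ q) ℝ).toBlocks₁₂ = 0 := by
  ext i j; simp [toBlocks₁₂, Matrix.one_apply]

lemma tb_one₂₂ : (1 : Matrix (p ⊕ q) (p ⊕ q) ℝ).toBlocks₂₂ = 1 := by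
  ext i j; simp [toBlocks₂₂, Matrix.one_apply]

lemma tb_t₁₁ (X : Matrix (p ⊕ q) (p ⊕ q) ℝ) :
    (Xᵀ).toBlocks₁₁ = (X.toBlocks₁₁)ᵀ := rfl

lemma tb_t₁₂ (X : Matrix (p ⊕ q) (p ⊕ q) ℝ) :
    (Xᵀ).toBlocks₁₂ = (X.toBlocks₂₁)ᵀ := rfl

lemma tb_add₁₂ (X Y : Matrix (p ⊕ q) (p ⊕ q) ℝ) :
    (X + Y).toBlocks₁₂ = X.toBlocks₁₂ + Y.toBlocks₁₂ := rfl

lemma mul_vecMulVec' (M : Matrix p p ℝ) (u : p → ℝ) (w : q → ℝ) :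
    M * vecMulVec u w = vecMulVec (M *ᵥ u) w := by
  ext i j
  simp [Matrix.mul_apply, vecMulVec_apply, Matrix.mulVec, dotProduct,
    Finset.sum_mul, mul_assoc]

lemma vecMulVec_mul' (u : p → ℝ) (w : q → ℝ) (N : Matrix q q ℝ) :
    vecMulVec u w * N = vecMulVec u (w ᵥ* N) := by
  ext i j
  simp [Matrix.mul_apply, vecMulVec_apply, Matrix.vecMul, dotProduct,
    Finset.mul_sum, mul_assoc]

lemma vecMulVec_add_left (x y : p → ℝ) (r : q → ℝ) :
    vecMulVec (x + y) r = vecMulVec x r + vecMulVec y r := by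
  ext i j; simp [vecMulVec_apply, add_mul]

lemma vecMulVec_neg_left (x : p → ℝ) (r : q → ℝ) :
    vecMulVec (-x) r = -vecMulVec x r := by
  ext i j; simp [vecMulVec_apply]

lemma rank_pair (x y : p → ℝ) (r t : q → ℝ) :
    (vecMulVec x r + vecMulVec y t).rank ≤ 2 := by
  have h : vecMulVec x r + vecMulVec y t =
      (Matrix.of fun i (s : Fin 2) => if s = 0 then x i else y i) *
        (Matrix.of fun (s : Fin 2) j => if s = 0 then r j else t j) := by
    ext i j
    simp [Matrix.mul_apply, Fin.sum_univ_two, vecMulVec_apply]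
  rw [h]
  exact (Matrix.rank_mul_le_left _ _).trans
    ((Matrix.rank_le_card_width _).trans (by simp))


lemma key_blocks (A S R : Matrix (p ⊕ q) (p ⊕ q) ℝ)
    (hSR : S * R = 1) (hRS : R * S = 1)
    (hR21 : R.toBlocks₂₁ = 0)
    (hRR : Rᵀ * R = A * A + 1)
    (u : p → ℝ) (w : q → ℝ) (hA12 : A.toBlocks₁₂ = vecMulVec u w) :
    ∃ x₁ x₂ y₁ y₂ : p → ℝ, ∃ r t : q → ℝ,
      S.toBlocks₁₂ = vecMulVec x₁ r + vecMulVec x₂ t ∧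
      (A * S).toBlocks₁₂ = vecMulVec y₁ r + vecMulVec y₂ t := by
  have h11 : S.toBlocks₁₁ * R.toBlocks₁₁ = 1 := by
    have h := congrArg Matrix.toBlocks₁₁ hSR
    rwa [tb_mul₁₁, hR21, Matrix.mul_zero, add_zero, tb_one₁₁] at h
  have h12 : S.toBlocks₁₁ * R.toBlocks₁₂ + S.toBlocks₁₂ * R.toBlocks₂₂ = 0 := by
    have h := congrArg Matrix.toBlocks₁₂ hSR
    rwa [tb_mul₁₂, tb_one₁₂] at h
  have g22 : R.toBlocks₂₂ * S.toBlocks₂₂ = 1 := by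
    have h := congrArg Matrix.toBlocks₂₂ hRS
    rwa [tb_mul₂₂, hR21, Matrix.zero_mul, zero_add, tb_one₂₂] at h
  have hc : R.toBlocks₁₁ * S.toBlocks₁₁ = 1 := mul_eq_one_comm.mp h11
  have hZ : (R.toBlocks₁₁)ᵀ * R.toBlocks₁₂ =
      A.toBlocks₁₁ * A.toBlocks₁₂ + A.toBlocks₁₂ * A.toBlocks₂₂ := by
    have h := congrArg Matrix.toBlocks₁₂ hRR
    rwa [tb_mul₁₂, tb_t₁₂, hR21, transpose_zero, Matrix.zero_mul, add_zero,
      tb_add₁₂, tb_mul₁₂, tb_one₁₂, add_zero, tb_t₁₁] at h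
  have ht : (S.toBlocks₁₁)ᵀ * (R.toBlocks₁₁)ᵀ = 1 := by
    rw [← transpose_mul, hc, transpose_one]
  set V : Matrix p q ℝ :=
    vecMulVec (A.toBlocks₁₁ *ᵥ u) w + vecMulVec u (w ᵥ* A.toBlocks₂₂) with hV
  have hVeq : A.toBlocks₁₁ * A.toBlocks₁₂ + A.toBlocks₁₂ * A.toBlocks₂₂ = V := by
    rw [hV, hA12, mul_vecMulVec', vecMulVec_mul']
  have hr12 : R.toBlocks₁₂ = (S.toBlocks₁₁)ᵀ * V := by
    calc R.toBlocks₁₂ = ((S.toBlocks₁₁)ᵀ * (R.toBlocks₁₁)ᵀ) * R.toBlocks₁₂ := by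
          rw [ht, Matrix.one_mul]
      _ = (S.toBlocks₁₁)ᵀ * ((R.toBlocks₁₁)ᵀ * R.toBlocks₁₂) := by
          rw [Matrix.mul_assoc]
      _ = (S.toBlocks₁₁)ᵀ * V := by rw [hZ, hVeq]
  have hs12 : S.toBlocks₁₂ = -(S.toBlocks₁₁ * ((S.toBlocks₁₁)ᵀ * V) * S.toBlocks₂₂) := by
    calc S.toBlocks₁₂ = S.toBlocks₁₂ * (R.toBlocks₂₂ * S.toBlocks₂₂) := by
          rw [g22, Matrix.mul_one]
      _ = (S.toBlocks₁₂ * R.toBlocks₂₂) * S.toBlocks₂₂ := by rw [Matrix.mul_assoc]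
      _ = (-(S.toBlocks₁₁ * R.toBlocks₁₂)) * S.toBlocks₂₂ := by
          rw [eq_neg_of_add_eq_zero_right h12]
      _ = -(S.toBlocks₁₁ * R.toBlocks₁₂ * S.toBlocks₂₂) := by rw [Matrix.neg_mul]
      _ = _ := by rw [hr12]
  set x₁ : p → ℝ := S.toBlocks₁₁ *ᵥ ((S.toBlocks₁₁)ᵀ *ᵥ (A.toBlocks₁₁ *ᵥ u)) with hx₁
  set x₂ : p → ℝ := S.toBlocks₁₁ *ᵥ ((S.toBlocks₁₁)ᵀ *ᵥ u) with hx₂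
  set r : q → ℝ := w ᵥ* S.toBlocks₂₂ with hr
  set t : q → ℝ := (w ᵥ* A.toBlocks₂₂) ᵥ* S.toBlocks₂₂ with htt
  have hstep : S.toBlocks₁₁ * ((S.toBlocks₁₁)ᵀ * V) * S.toBlocks₂₂ =
      vecMulVec x₁ r + vecMulVec x₂ t := by
    rw [hV, Matrix.mul_add, mul_vecMulVec', mul_vecMulVec', Matrix.mul_add,
      mul_vecMulVec', mul_vecMulVec', Matrix.add_mul, vecMulVec_mul', vecMulVec_mul']
  have hfin1 : S.toBlocks₁₂ = vecMulVec (-x₁) r + vecMulVec (-x₂) t := by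
    rw [hs12, hstep, neg_add, vecMulVec_neg_left, vecMulVec_neg_left]
  refine ⟨-x₁, -x₂, A.toBlocks₁₁ *ᵥ (-x₁) + u, A.toBlocks₁₁ *ᵥ (-x₂), r, t, hfin1, ?_⟩
  have hAS : (A * S).toBlocks₁₂ =
      A.toBlocks₁₁ * S.toBlocks₁₂ + A.toBlocks₁₂ * S.toBlocks₂₂ := tb_mul₁₂ A S
  rw [hAS, hfin1, hA12, Matrix.mul_add, mul_vecMulVec', mul_vecMulVec',
    vecMulVec_mul', vecMulVec_add_left]
  abel

end Helpers

/-- The upper off-diagonal block `M(1:k, k+1:n)` of a square matrix. -/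
def offUpper {α : Type*} {n : ℕ} (M : Matrix (Fin n) (Fin n) α) (k : ℕ) (hk : k < n) :
    Matrix (Fin k) (Fin (n - k)) α :=
  M.submatrix (fun i => ⟨i.1, i.2.trans hk⟩) (fun j => ⟨k + j.1, by omega⟩)

/-- Let `A` be symmetric tridiagonal and `[A; I] = [Q₁; Q₂] R` a thin QR
factorization with orthonormal columns and `R` invertible upper triangular. Then for every
`1 ≤ k < n`, the blocks `Q(1:k, k+1:n) = Q₁(1:k, k+1:n)` and
`Q(n+1:n+k, k+1:n) = Q₂(1:k, k+1:n)` have rank at most `2`. -/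
theorem qr_tridiagonal_offdiag_rank {n : ℕ} (A Q₁ Q₂ R : Matrix (Fin n) (Fin n) ℝ)
    (hsymm : Aᵀ = A)
    (htri : ∀ i j : Fin n, (1 : ℤ) < |(i : ℤ) - (j : ℤ)| → A i j = 0)
    (horth : (Matrix.fromRows Q₁ Q₂)ᵀ * Matrix.fromRows Q₁ Q₂ = 1)
    (hinv : IsUnit R.det) (hupper : R.BlockTriangular id)
    (hQR : Matrix.fromRows A (1 : Matrix (Fin n) (Fin n) ℝ) =
      Matrix.fromRows Q₁ Q₂ * R)
    (k : ℕ) (hk1 : 1 ≤ k) (hkn : k < n) :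
    (offUpper Q₁ k hkn).rank ≤ 2 ∧ (offUpper Q₂ k hkn).rank ≤ 2 := by
  classical
  -- extract the two row-block equations
  have hQR' := hQR
  rw [fromRows_mul] at hQR'
  obtain ⟨hA, hI⟩ := (fromRows_ext_iff _ _ _ _).mp hQR'
  have hSR0 : Q₂ * R = 1 := hI.symm
  have hRS0 : R * Q₂ = 1 := mul_eq_one_comm.mp hSR0
  have hQ1 : Q₁ = A * Q₂ := by
    calc Q₁ = Q₁ * (R * Q₂) := by rw [hRS0, Matrix.mul_one]
      _ = (Q₁ * R) * Q₂ := by rw [Matrix.mul_assoc]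
      _ = A * Q₂ := by rw [← hA]
  have hRR0 : Rᵀ * R = A * A + 1 := by
    have h1 : (Matrix.fromRows A (1 : Matrix (Fin n) (Fin n) ℝ))ᵀ *
        Matrix.fromRows A (1 : Matrix (Fin n) (Fin n) ℝ) = Rᵀ * R := by
      rw [hQR, Matrix.transpose_mul, Matrix.mul_assoc,
        ← Matrix.mul_assoc (Matrix.fromRows Q₁ Q₂)ᵀ, horth, Matrix.one_mul]
    rw [transpose_fromRows, fromCols_mul_fromRows, hsymm, transpose_one,
      Matrix.one_mul] at h1
    exact h1.symm
  -- transport to the block (sum-type) world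
  have hkk : k + (n - k) = n := by omega
  let e : Fin k ⊕ Fin (n - k) ≃ Fin n := finSumFinEquiv.trans (finCongr hkk)
  have he₁ : ∀ i : Fin k, (e (Sum.inl i) : ℕ) = i := by
    intro i; simp [e, finSumFinEquiv_apply_left]
  have he₂ : ∀ j : Fin (n - k), (e (Sum.inr j) : ℕ) = k + j := by
    intro j; simp [e, finSumFinEquiv_apply_right]
  have hsub : ∀ M N : Matrix (Fin n) (Fin n) ℝ,
      (M * N).submatrix e e = M.submatrix e e * N.submatrix e e := by
    intro M N; rw [Matrix.submatrix_mul_equiv]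
  have hone : (1 : Matrix (Fin n) (Fin n) ℝ).submatrix e e = 1 :=
    Matrix.submatrix_one_equiv e
  have hSR : Q₂.submatrix e e * R.submatrix e e = 1 := by
    rw [← hsub, hSR0, hone]
  have hRS : R.submatrix e e * Q₂.submatrix e e = 1 := by
    rw [← hsub, hRS0, hone]
  have hR21 : (R.submatrix e e).toBlocks₂₁ = 0 := by
    ext i j
    exact hupper (show (id (e (Sum.inl j)) : Fin n) < id (e (Sum.inr i)) by
      simp only [id_eq, Fin.lt_def, he₁, he₂]; omega)
  have hRR : (R.submatrix e e)ᵀ * R.submatrix e e =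
      A.submatrix e e * A.submatrix e e + 1 := by
    have hadd : (A * A + 1).submatrix e e =
        (A * A).submatrix e e + (1 : Matrix (Fin n) (Fin n) ℝ).submatrix e e := rfl
    rw [Matrix.transpose_submatrix, ← hsub, hRR0, hadd, hsub, hone]
  -- the tridiagonal corner structure
  set u : Fin k → ℝ := fun i => if (i : ℕ) + 1 = k then 1 else 0 with hu
  set w : Fin (n - k) → ℝ :=
    fun j => if (j : ℕ) = 0 then A ⟨k - 1, by omega⟩ ⟨k, hkn⟩ else 0 with hw
  have hA12 : (A.submatrix e e).toBlocks₁₂ = vecMulVec u w := by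
    ext i j
    show A (e (Sum.inl i)) (e (Sum.inr j)) = u i * w j
    by_cases hij : (i : ℕ) + 1 = k ∧ (j : ℕ) = 0
    · have hcongr : A (e (Sum.inl i)) (e (Sum.inr j)) =
          A ⟨k - 1, by omega⟩ ⟨k, hkn⟩ := by
        congr 1 <;> apply Fin.ext <;> simp [he₁, he₂, hij.1, hij.2] <;> omega
      rw [hcongr, hu, hw]
      simp [hij.1, hij.2]
    · have h0 : A (e (Sum.inl i)) (e (Sum.inr j)) = 0 := by
        apply htri
        have h₁ := he₁ i
        have h₂ := he₂ j
        have hik : (i : ℕ) < k := i.2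
        rw [abs_sub_comm, abs_of_nonneg (by omega)]
        omega
      rw [h0, hu, hw]
      rcases not_and_or.mp hij with h | h <;> simp [h]
  -- apply the key lemma
  obtain ⟨x₁, x₂, y₁, y₂, r, t, hS, hP⟩ :=
    key_blocks (A.submatrix e e) (Q₂.submatrix e e) (R.submatrix e e)
      hSR hRS hR21 hRR u w hA12
  -- identify the off-diagonal blocks
  have hoff : ∀ M : Matrix (Fin n) (Fin n) ℝ,
      offUpper M k hkn = (M.submatrix e e).toBlocks₁₂ := by
    intro M
    ext i j
    show M _ _ = M (e (Sum.inl i)) (e (Sum.inr j))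
    congr 1 <;> apply Fin.ext <;> simp [he₁, he₂, offUpper]
  constructor
  · rw [hoff, hQ1, hsub, hP]
    exact rank_pair _ _ _ _
  · rw [hoff, hS]
    exact rank_pair _ _ _ _
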